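/- Let G be a finite simple graph on a vertex set V with n = |V| ≥ 2, let e₀ = {x,y} be an edge of G, let G' = G − e₀ be the graph with e₀ deleted, and let α : V → V → ℝ be antisymmetric. For the magnetic combinatorial Laplacians (vertex weight 1, edge weight the adjacency indicator) of G and G' (with the same α): (i) λ_k(G', α) ≤ λ_k(G, α) for all 1 ≤ k ≤ n; (ii) λ_k(G, α) ≤ λ_{k+1}(G', α) for all 1 ≤ k ≤ n − 1; and (iii) there exists 1 ≤ k ≤ n with λ_k(G', α) < λ_k(G, α). -/

import Mathlib

/-- The magnetic weighted Laplacian `Δ(w,m,α)` as a matrix acting on `ℂ^V`: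
`(Δφ)(v) = (1/m v) · Σ_u w v u · (φ(v) − exp(i·α v u)·φ(u))`. -/
noncomputable def magLap {V : Type} [Fintype V] [DecidableEq V]
    (w : V → V → ℝ) (m : V → ℝ) (α : V → V → ℝ) : Matrix V V ℂ :=
  fun v u => (if v = u then (((∑ u', w v u') / m v : ℝ) : ℂ) else 0)
    - ((w v u / m v : ℝ) : ℂ) * Complex.exp (Complex.I * (α v u : ℝ))

open scoped Classical

/-- The magnetic combinatorial Laplacian of a simple graph: vertex weight `1`,
edge weight the adjacency indicator. -/
noncomputable def combLap {V : Type} [Fintype V] [DecidableEq V]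
    (G : SimpleGraph V) (α : V → V → ℝ) : Matrix V V ℂ :=
  magLap (fun v u => if G.Adj v u then 1 else 0) (fun _ => 1) α

/-- The eigenvalues (with multiplicity, nondecreasing) of a matrix with real
spectrum: real parts of the roots of the characteristic polynomial, sorted;
`lamk A k` is the `(k+1)`-st smallest (0-based index). -/
noncomputable def lamk {V : Type} [Fintype V] [DecidableEq V] (A : Matrix V V ℂ) (k : ℕ) : ℝ :=
  ((A.charpoly.roots.map Complex.re).sort (· ≤ ·)).getD k 0


open Polynomial Matrix

section Aux
variable {V : Type} [Fintype V] [DecidableEq V]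



lemma charpoly_diagonal_roots (d : V → ℝ) :
    (Matrix.diagonal (fun v => (d v : ℂ))).charpoly.roots
      = Finset.univ.val.map (fun v => (d v : ℂ)) := by
  have h1 : charmatrix (Matrix.diagonal (fun v => (d v : ℂ)))
      = Matrix.diagonal (fun v => (X : ℂ[X]) - C (d v : ℂ)) := by
    ext i j
    by_cases h : i = j
    · subst h; simp [charmatrix_apply_eq]
    · simp [charmatrix_apply_ne _ _ _ h, Matrix.diagonal_apply_ne _ h]
  rw [Matrix.charpoly, h1, det_diagonal]
  rw [Finset.prod_eq_multiset_prod]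
  rw [show Multiset.map (fun v => (X : ℂ[X]) - C (d v : ℂ)) Finset.univ.val
      = Multiset.map (fun a => (X : ℂ[X]) - C a) (Finset.univ.val.map (fun v => (d v : ℂ)))
    by rw [Multiset.map_map]; rfl]
  exact roots_multiset_prod_X_sub_C _

lemma herm_charpoly_roots {A : Matrix V V ℂ} (hA : A.IsHermitian) :
    A.charpoly.roots = Finset.univ.val.map (fun v => (hA.eigenvalues v : ℂ)) := by
  have hsp := hA.spectral_theorem
  set U : Matrix V V ℂ := (hA.eigenvectorUnitary : Matrix V V ℂ) with hU
  have hUU : U * star U = 1 := Matrix.mem_unitaryGroup_iff.mp hA.eigenvectorUnitary.2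
  have hD : Matrix.diagonal (RCLike.ofReal ∘ hA.eigenvalues)
      = Matrix.diagonal (fun v => (hA.eigenvalues v : ℂ)) := rfl
  have hcp : A.charpoly = (Matrix.diagonal (fun v => (hA.eigenvalues v : ℂ))).charpoly := by
    rw [Matrix.charpoly, Matrix.charpoly]
    have hcm : charmatrix A
        = U.map C * charmatrix (Matrix.diagonal (fun v => (hA.eigenvalues v : ℂ)))
          * (star U).map C := by
      rw [charmatrix, charmatrix]
      rw [Matrix.mul_sub, Matrix.sub_mul]
      congr 1
      · -- U.map C * scalar X * (star U).map C = scalar X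
        rw [Matrix.mul_assoc, Matrix.scalar_commute X (fun r => Commute.all _ _) ((star U).map C),
          ← Matrix.mul_assoc, ← Matrix.map_mul, hUU]
        simp
      · simp only [RingHom.mapMatrix_apply]
        rw [← hD, ← Matrix.map_mul, ← Matrix.map_mul]
        conv_lhs => rw [hsp]
        rfl
    have hUU' : star U * U = 1 := Matrix.mem_unitaryGroup_iff'.mp hA.eigenvectorUnitary.2
    rw [hcm, det_mul, det_mul, mul_comm, ← mul_assoc, ← det_mul, ← Matrix.map_mul, hUU']
    simp
  rw [hcp, charpoly_diagonal_roots]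

lemma sorted_eigen {A : Matrix V V ℂ} (hA : A.IsHermitian) :
    ∃ (μ : Fin (Fintype.card V) → ℝ) (b : Fin (Fintype.card V) → (V → ℂ)),
      Monotone μ ∧
      (A.charpoly.roots = Finset.univ.val.map (fun i : Fin (Fintype.card V) => (μ i : ℂ))) ∧
      (∀ i, A *ᵥ b i = (μ i : ℂ) • b i) ∧
      (∀ i j, star (b i) ⬝ᵥ b j = if i = j then 1 else 0) ∧
      (∀ φ : V → ℂ, ∑ i, (star (b i) ⬝ᵥ φ) • b i = φ) := by
  classical
  set n := Fintype.card V with hn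
  let ε : V ≃ Fin n := Fintype.equivFin V
  let g : Fin n → ℝ := hA.eigenvalues ∘ ε.symm
  let σ : Equiv.Perm (Fin n) := Tuple.sort g
  let e0 : V ≃ Fin n := ε.trans σ.symm
  have he0 : ∀ i, e0.symm i = ε.symm (σ i) := fun i => rfl
  let B : OrthonormalBasis (Fin n) ℂ (EuclideanSpace ℂ V) := hA.eigenvectorBasis.reindex e0
  have hB : ∀ i, B i = hA.eigenvectorBasis (ε.symm (σ i)) := by
    intro i; rw [OrthonormalBasis.reindex_apply, he0]
  refine ⟨g ∘ σ, fun i => B i, Tuple.monotone_sort g, ?_, ?_, ?_, ?_⟩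
  · rw [herm_charpoly_roots hA]
    have h1 : Multiset.map (⇑e0.symm) Finset.univ.val = (Finset.univ : Finset V).val := by
      have := congrArg Finset.val (Finset.map_univ_equiv e0.symm)
      simpa using this
    rw [← h1, Multiset.map_map]
    rfl
  · intro i
    have hBf : (fun w => B i w) = (hA.eigenvectorBasis (ε.symm (σ i))).ofLp := by
      rw [hB i]
    show A *ᵥ (fun w => B i w) = ((g (σ i) : ℝ) : ℂ) • (fun w => B i w)
    rw [hBf, hA.mulVec_eigenvectorBasis]
    funext w
    simp only [Pi.smul_apply, Complex.real_smul, smul_eq_mul]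
    rfl
  · intro i j
    have := (orthonormal_iff_ite (v := ⇑B)).mp B.orthonormal i j
    rw [EuclideanSpace.inner_eq_star_dotProduct, dotProduct_comm] at this
    exact this
  · intro φ
    have h2 : ∀ i, B.repr (WithLp.toLp 2 φ) i = star ((fun w => B i w) : V → ℂ) ⬝ᵥ φ := by
      intro i
      rw [B.repr_apply_apply, EuclideanSpace.inner_eq_star_dotProduct, dotProduct_comm]
    have h3 : ∑ i, (star ((fun w => B i w) : V → ℂ) ⬝ᵥ φ) • B i = WithLp.toLp 2 φ := by
      calc ∑ i, (star ((fun w => B i w) : V → ℂ) ⬝ᵥ φ) • B i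
          = ∑ i, B.repr (WithLp.toLp 2 φ) i • B i := Finset.sum_congr rfl (fun i _ => by rw [h2 i])
        _ = WithLp.toLp 2 φ := B.sum_repr _
    have h4 := congrArg WithLp.ofLp h3
    rw [WithLp.ofLp_sum] at h4
    simp only [WithLp.ofLp_smul] at h4
    exact h4

lemma lamk_eq {A : Matrix V V ℂ} {μ : Fin (Fintype.card V) → ℝ}
    (hmono : Monotone μ)
    (hroots : A.charpoly.roots = Finset.univ.val.map (fun i : Fin (Fintype.card V) => (μ i : ℂ)))
    (k : ℕ) (hk : k < Fintype.card V) :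
    lamk A k = μ ⟨k, hk⟩ := by
  unfold lamk
  rw [hroots, Multiset.map_map]
  have h1 : (Multiset.map (Complex.re ∘ fun i : Fin (Fintype.card V) => ((μ i : ℂ))) Finset.univ.val)
      = (List.ofFn μ : Multiset ℝ) := by
    rw [Fin.univ_def]
    rw [Multiset.map_coe, ← List.ofFn_eq_map]
    congr 1
  rw [h1]
  have h2 : Multiset.sort (List.ofFn μ : Multiset ℝ) (· ≤ ·) = List.ofFn μ := by
    apply List.Perm.eq_of_pairwise' (Multiset.pairwise_sort _ _)
      (List.pairwise_ofFn.mpr fun i j hij => hmono hij.le) (Multiset.coe_eq_coe.mp (Multiset.sort_eq _ _))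
  rw [h2, List.getD_eq_getElem _ _ (by simpa using hk)]
  simp

end Aux

section Stage3
variable {V : Type} [Fintype V] [DecidableEq V]

lemma conj_dot (φ ψ : V → ℂ) : star φ ⬝ᵥ ψ = (starRingEnd ℂ) (star ψ ⬝ᵥ φ) := by
  rw [Matrix.star_dotProduct]
  rfl

lemma dot_sum {ι : Type*} (s : Finset ι) (v : V → ℂ) (f : ι → V → ℂ) :
    v ⬝ᵥ (∑ i ∈ s, f i) = ∑ i ∈ s, v ⬝ᵥ f i := by
  unfold dotProduct
  simp only [Finset.sum_apply, Finset.mul_sum]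
  exact Finset.sum_comm

lemma dot_expansion {b : Fin (Fintype.card V) → V → ℂ}
    (hcompl : ∀ φ : V → ℂ, ∑ i, (star (b i) ⬝ᵥ φ) • b i = φ) (φ ψ : V → ℂ) :
    star φ ⬝ᵥ ψ = ∑ i, (star (b i) ⬝ᵥ ψ) * (starRingEnd ℂ) (star (b i) ⬝ᵥ φ) := by
  conv_lhs => rw [← hcompl ψ]
  rw [dot_sum]
  refine Finset.sum_congr rfl fun i _ => ?_
  rw [dotProduct_smul, smul_eq_mul, conj_dot φ (b i)]

lemma norm_expansion {b : Fin (Fintype.card V) → V → ℂ}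
    (hcompl : ∀ φ : V → ℂ, ∑ i, (star (b i) ⬝ᵥ φ) • b i = φ) (φ : V → ℂ) :
    star φ ⬝ᵥ φ = ((∑ i, Complex.normSq (star (b i) ⬝ᵥ φ) : ℝ) : ℂ) := by
  rw [dot_expansion hcompl φ φ]
  push_cast
  exact Finset.sum_congr rfl fun i _ => (Complex.mul_conj _)

lemma rayleigh_expansion {A : Matrix V V ℂ} (hA : A.IsHermitian)
    {μ : Fin (Fintype.card V) → ℝ} {b : Fin (Fintype.card V) → V → ℂ}
    (heig : ∀ i, A *ᵥ b i = (μ i : ℂ) • b i)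
    (hcompl : ∀ φ : V → ℂ, ∑ i, (star (b i) ⬝ᵥ φ) • b i = φ) (φ : V → ℂ) :
    star φ ⬝ᵥ (A *ᵥ φ) = ((∑ i, μ i * Complex.normSq (star (b i) ⬝ᵥ φ) : ℝ) : ℂ) := by
  rw [dot_expansion hcompl φ (A *ᵥ φ)]
  push_cast
  refine Finset.sum_congr rfl fun i _ => ?_
  have hd : star (b i) ⬝ᵥ (A *ᵥ φ) = (μ i : ℂ) * (star (b i) ⬝ᵥ φ) := by
    rw [Matrix.dotProduct_mulVec]
    have h1 : star (b i) ᵥ* A = star ((μ i : ℂ) • b i) := by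
      rw [← heig i, Matrix.star_mulVec, hA.eq]
    rw [h1]
    simp [smul_dotProduct]
  rw [hd, mul_assoc, Complex.mul_conj]

lemma exists_solution {p : ℕ} {W : Type} [Fintype W] (h : Fintype.card W < p)
    (M : Matrix W (Fin p) ℂ) : ∃ c : Fin p → ℂ, c ≠ 0 ∧ M *ᵥ c = 0 := by
  have hni : ¬ Function.Injective M.mulVecLin := by
    intro hinj
    have h2 := LinearMap.finrank_le_finrank_of_injective hinj
    rw [Module.finrank_pi, Module.finrank_pi] at h2
    simp at h2
    omega
  rw [Function.not_injective_iff] at hni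
  obtain ⟨a, b, hab, hne⟩ := hni
  refine ⟨a - b, sub_ne_zero_of_ne hne, ?_⟩
  have : M.mulVecLin (a - b) = 0 := by rw [map_sub, hab, sub_self]
  simpa using this

lemma exists_test_vector {p q : ℕ} (hq : q < p) (hp : p ≤ Fintype.card V)
    (b : Fin (Fintype.card V) → V → ℂ)
    (horth : ∀ i j, star (b i) ⬝ᵥ b j = if i = j then 1 else 0)
    (w : Fin q → V → ℂ) :
    ∃ φ : V → ℂ, φ ≠ 0 ∧ (∀ j, star (w j) ⬝ᵥ φ = 0) ∧
      (∀ i : Fin (Fintype.card V), p ≤ (i : ℕ) → star (b i) ⬝ᵥ φ = 0) := by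
  classical
  obtain ⟨c, hc0, hcsol⟩ := exists_solution (by simpa using hq)
    (Matrix.of fun (j : Fin q) (i : Fin p) => star (w j) ⬝ᵥ b (Fin.castLE hp i))
  set φ : V → ℂ := ∑ i : Fin p, c i • b (Fin.castLE hp i) with hφ
  have hdot : ∀ ψ : V → ℂ, star ψ ⬝ᵥ φ = ∑ i : Fin p, c i * (star ψ ⬝ᵥ b (Fin.castLE hp i)) := by
    intro ψ
    rw [hφ, dot_sum]
    exact Finset.sum_congr rfl fun i _ => by rw [dotProduct_smul, smul_eq_mul]
  have hcoef : ∀ i : Fin p, star (b (Fin.castLE hp i)) ⬝ᵥ φ = c i := by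
    intro i
    have key : ∀ i' : Fin p,
        c i' * (star (b (Fin.castLE hp i)) ⬝ᵥ b (Fin.castLE hp i')) = if i' = i then c i' else 0 := by
      intro i'
      rw [horth]
      by_cases h : i' = i
      · simp [h]
      · have h2 : ¬ (Fin.castLE hp i = Fin.castLE hp i') := fun e => h (Fin.castLE_inj.mp e).symm
        simp [h, h2]
    rw [hdot, Finset.sum_congr rfl (fun i' _ => key i')]
    simp
  refine ⟨φ, ?_, ?_, ?_⟩
  · intro h0
    obtain ⟨i0, hi0⟩ := Function.ne_iff.mp hc0
    apply hi0
    rw [← hcoef i0, h0, dotProduct_zero]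
    rfl
  · intro j
    have := congrFun hcsol j
    rw [hdot (w j)]
    rw [show (0 : Fin q → ℂ) j = 0 from rfl] at this
    rw [← this]
    simp [Matrix.mulVec, dotProduct]
    exact Finset.sum_congr rfl fun i _ => mul_comm _ _
  · intro i hi
    rw [hdot]
    apply Finset.sum_eq_zero
    intro i' _
    rw [horth]
    have : ¬ (i = Fin.castLE hp i') := by
      intro he
      have : (i : ℕ) = (i' : ℕ) := by rw [he]; rfl
      omega
    simp [this]

end Stage3

section Stage4
variable {V : Type} [Fintype V] [DecidableEq V]

lemma sum_lower {n : ℕ} {μ : Fin n → ℝ} (hmono : Monotone μ) (r : Fin n → ℝ)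
    (hr : ∀ i, 0 ≤ r i) (m : Fin n) (hv : ∀ i, i < m → r i = 0) :
    μ m * ∑ i, r i ≤ ∑ i, μ i * r i := by
  rw [Finset.mul_sum]
  refine Finset.sum_le_sum fun i _ => ?_
  rcases lt_or_ge i m with h | h
  · simp [hv i h]
  · exact mul_le_mul_of_nonneg_right (hmono h) (hr i)

lemma sum_upper {n : ℕ} {μ : Fin n → ℝ} (hmono : Monotone μ) (r : Fin n → ℝ)
    (hr : ∀ i, 0 ≤ r i) (m : Fin n) (hv : ∀ i, m < i → r i = 0) :
    ∑ i, μ i * r i ≤ μ m * ∑ i, r i := by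
  rw [Finset.mul_sum]
  refine Finset.sum_le_sum fun i _ => ?_
  rcases lt_or_ge m i with h | h
  · simp [hv i h]
  · exact mul_le_mul_of_nonneg_right (hmono h) (hr i)

lemma vecMulVec_dot (u φ : V → ℂ) :
    star φ ⬝ᵥ (Matrix.vecMulVec u (star u) *ᵥ φ) = ((Complex.normSq (star u ⬝ᵥ φ) : ℝ) : ℂ) := by
  have h1 : Matrix.vecMulVec u (star u) *ᵥ φ = (star u ⬝ᵥ φ) • u := by
    funext v
    simp only [Matrix.mulVec, dotProduct, Matrix.vecMulVec_apply, Pi.smul_apply,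
      smul_eq_mul, Finset.sum_mul]
    exact Finset.sum_congr rfl fun w _ => by ring
  rw [h1, dotProduct_smul, smul_eq_mul, conj_dot φ u, Complex.mul_conj]

lemma nonzero_sum_normSq {b : Fin (Fintype.card V) → V → ℂ}
    (hcompl : ∀ φ : V → ℂ, ∑ i, (star (b i) ⬝ᵥ φ) • b i = φ) {φ : V → ℂ} (hφ0 : φ ≠ 0) :
    0 < ∑ i, Complex.normSq (star (b i) ⬝ᵥ φ) := by
  have hex : ∃ i, star (b i) ⬝ᵥ φ ≠ 0 := by
    by_contra hall
    push_neg at hall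
    apply hφ0
    rw [← hcompl φ]
    exact Finset.sum_eq_zero fun i _ => by rw [hall i, zero_smul]
  obtain ⟨i0, hi0⟩ := hex
  exact Finset.sum_pos' (fun i _ => Complex.normSq_nonneg _)
    ⟨i0, Finset.mem_univ _, Complex.normSq_pos.mpr hi0⟩

lemma interlace {A M : Matrix V V ℂ} {u : V → ℂ} (hA : A.IsHermitian) (hM : M.IsHermitian)
    (hMA : M = A + Matrix.vecMulVec u (star u)) :
    (∀ k : ℕ, ∀ _ : k < Fintype.card V, lamk A k ≤ lamk M k) ∧
    (∀ k : ℕ, ∀ _ : k + 1 < Fintype.card V, lamk M k ≤ lamk A (k + 1)) := by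
  classical
  obtain ⟨μ, b, hμ, hμr, hbe, hbo, hbc⟩ := sorted_eigen hA
  obtain ⟨ν, f, hν, hνr, hfe, hfo, hfc⟩ := sorted_eigen hM
  constructor
  · intro k hk
    rw [lamk_eq hμ hμr k hk, lamk_eq hν hνr k hk]
    obtain ⟨φ, hφ0, hcons, hhigh⟩ := exists_test_vector (Nat.lt_succ_self k) hk f hfo
      (fun j : Fin k => b (Fin.castLE hk.le j))
    set rA : Fin (Fintype.card V) → ℝ := fun i => Complex.normSq (star (b i) ⬝ᵥ φ) with hrA
    set rM : Fin (Fintype.card V) → ℝ := fun i => Complex.normSq (star (f i) ⬝ᵥ φ) with hrM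
    have hrA0 : ∀ i, 0 ≤ rA i := fun i => Complex.normSq_nonneg _
    have hrM0 : ∀ i, 0 ≤ rM i := fun i => Complex.normSq_nonneg _
    have hSsame : ∑ i, rA i = ∑ i, rM i := by
      have h := (norm_expansion hbc φ).symm.trans (norm_expansion hfc φ)
      exact_mod_cast h
    have hsum : (∑ i, μ i * rA i) + Complex.normSq (star u ⬝ᵥ φ) = ∑ i, ν i * rM i := by
      have h : star φ ⬝ᵥ (M *ᵥ φ)
          = star φ ⬝ᵥ (A *ᵥ φ) + star φ ⬝ᵥ (Matrix.vecMulVec u (star u) *ᵥ φ) := by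
        rw [hMA, Matrix.add_mulVec, dotProduct_add]
      rw [rayleigh_expansion hA hbe hbc φ, rayleigh_expansion hM hfe hfc φ,
        vecMulVec_dot u φ] at h
      exact_mod_cast h.symm
    have hpos : 0 < ∑ i, rA i := nonzero_sum_normSq hbc hφ0
    have hlow : μ ⟨k, hk⟩ * ∑ i, rA i ≤ ∑ i, μ i * rA i := by
      refine sum_lower hμ rA hrA0 ⟨k, hk⟩ fun i hi => ?_
      have hi' : (i : ℕ) < k := hi
      have h2 := hcons ⟨(i : ℕ), hi'⟩
      have h3 : Fin.castLE hk.le ⟨(i : ℕ), hi'⟩ = i := by ext; rfl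
      rw [h3] at h2
      simp [hrA, h2]
    have hup : ∑ i, ν i * rM i ≤ ν ⟨k, hk⟩ * ∑ i, rM i := by
      refine sum_upper hν rM hrM0 ⟨k, hk⟩ fun i hi => ?_
      have h2 := hhigh i (by exact hi)
      simp [hrM, h2]
    have hchain : μ ⟨k, hk⟩ * ∑ i, rA i ≤ ν ⟨k, hk⟩ * ∑ i, rA i := by
      calc μ ⟨k, hk⟩ * ∑ i, rA i ≤ ∑ i, μ i * rA i := hlow
        _ ≤ ∑ i, ν i * rM i := by
            rw [← hsum]; exact le_add_of_nonneg_right (Complex.normSq_nonneg _)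
        _ ≤ ν ⟨k, hk⟩ * ∑ i, rM i := hup
        _ = ν ⟨k, hk⟩ * ∑ i, rA i := by rw [hSsame]
    exact le_of_mul_le_mul_right hchain hpos
  · intro k hk
    have hk1 : k < Fintype.card V := Nat.lt_of_succ_lt hk
    rw [lamk_eq hν hνr k hk1, lamk_eq hμ hμr (k + 1) hk]
    obtain ⟨φ, hφ0, hcons, hhigh⟩ := exists_test_vector (Nat.lt_succ_self (k + 1))
      (Nat.succ_le_of_lt hk) b hbo
      (Fin.snoc (fun j : Fin k => f (Fin.castLE hk1.le j)) u)
    set rA : Fin (Fintype.card V) → ℝ := fun i => Complex.normSq (star (b i) ⬝ᵥ φ) with hrA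
    set rM : Fin (Fintype.card V) → ℝ := fun i => Complex.normSq (star (f i) ⬝ᵥ φ) with hrM
    have hrA0 : ∀ i, 0 ≤ rA i := fun i => Complex.normSq_nonneg _
    have hrM0 : ∀ i, 0 ≤ rM i := fun i => Complex.normSq_nonneg _
    have hz : star u ⬝ᵥ φ = 0 := by
      have h := hcons (Fin.last k)
      rwa [Fin.snoc_last] at h
    have hconsf : ∀ j : Fin k, star (f (Fin.castLE hk1.le j)) ⬝ᵥ φ = 0 := by
      intro j
      have h := hcons j.castSucc
      rwa [Fin.snoc_castSucc] at h
    have hSsame : ∑ i, rA i = ∑ i, rM i := by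
      have h := (norm_expansion hbc φ).symm.trans (norm_expansion hfc φ)
      exact_mod_cast h
    have hsum : (∑ i, μ i * rA i) = ∑ i, ν i * rM i := by
      have h : star φ ⬝ᵥ (M *ᵥ φ)
          = star φ ⬝ᵥ (A *ᵥ φ) + star φ ⬝ᵥ (Matrix.vecMulVec u (star u) *ᵥ φ) := by
        rw [hMA, Matrix.add_mulVec, dotProduct_add]
      rw [rayleigh_expansion hA hbe hbc φ, rayleigh_expansion hM hfe hfc φ,
        vecMulVec_dot u φ, hz] at h
      simp only [map_zero, Complex.ofReal_zero, add_zero] at h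
      exact_mod_cast h.symm
    have hpos : 0 < ∑ i, rA i := nonzero_sum_normSq hbc hφ0
    have hlow : ν ⟨k, hk1⟩ * ∑ i, rM i ≤ ∑ i, ν i * rM i := by
      refine sum_lower hν rM hrM0 ⟨k, hk1⟩ fun i hi => ?_
      have hi' : (i : ℕ) < k := hi
      have h2 := hconsf ⟨(i : ℕ), hi'⟩
      have h3 : Fin.castLE hk1.le ⟨(i : ℕ), hi'⟩ = i := by ext; rfl
      rw [h3] at h2
      simp [hrM, h2]
    have hup : ∑ i, μ i * rA i ≤ μ ⟨k + 1, hk⟩ * ∑ i, rA i := by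
      refine sum_upper hμ rA hrA0 ⟨k + 1, hk⟩ fun i hi => ?_
      have h2 := hhigh i (by exact hi)
      simp [hrA, h2]
    have hchain : ν ⟨k, hk1⟩ * ∑ i, rA i ≤ μ ⟨k + 1, hk⟩ * ∑ i, rA i := by
      calc ν ⟨k, hk1⟩ * ∑ i, rA i = ν ⟨k, hk1⟩ * ∑ i, rM i := by rw [hSsame]
        _ ≤ ∑ i, ν i * rM i := hlow
        _ = ∑ i, μ i * rA i := hsum.symm
        _ ≤ μ ⟨k + 1, hk⟩ * ∑ i, rA i := hup
    exact le_of_mul_le_mul_right hchain hpos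

lemma lamk_sum {A : Matrix V V ℂ} (hA : A.IsHermitian) :
    ∑ k ∈ Finset.range (Fintype.card V), lamk A k = (Matrix.trace A).re := by
  obtain ⟨μ, b, hμ, hμr, _, _, _⟩ := sorted_eigen hA
  have ht : Matrix.trace A = ∑ i : Fin (Fintype.card V), ((μ i : ℝ) : ℂ) := by
    rw [Matrix.trace_eq_sum_roots_charpoly, hμr]
    rfl
  have ht2 : (Matrix.trace A).re = ∑ i : Fin (Fintype.card V), μ i := by
    rw [ht]
    simp
  rw [ht2, ← Fin.sum_univ_eq_sum_range]
  refine Finset.sum_congr rfl fun i _ => ?_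
  rw [lamk_eq hμ hμr (i : ℕ) i.isLt]

end Stage4

section Stage5
variable {V : Type} [Fintype V] [DecidableEq V]

noncomputable def uvec (x y : V) (α : V → V → ℝ) : V → ℂ :=
  fun v => if v = x then 1 else if v = y then -Complex.exp (Complex.I * (α y x : ℝ)) else 0

lemma combLap_apply (G : SimpleGraph V) (α : V → V → ℝ) (v u : V) :
    combLap G α v u = (if v = u then ((∑ u', if G.Adj v u' then (1:ℝ) else 0 : ℝ) : ℂ) else 0)
      - ((if G.Adj v u then (1:ℝ) else 0 : ℝ) : ℂ) * Complex.exp (Complex.I * (α v u : ℝ)) := by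
  unfold combLap magLap
  norm_num

lemma exp_star {α : V → V → ℝ} (hα : ∀ v u, α v u = - α u v) (x y : V) :
    star (Complex.exp (Complex.I * (α y x : ℝ))) = Complex.exp (Complex.I * (α x y : ℝ)) := by
  rw [Complex.star_def, ← Complex.exp_conj]
  congr 1
  rw [_root_.map_mul, Complex.conj_I, Complex.conj_ofReal, hα x y]
  push_cast
  ring

lemma exp_mul_exp {α : V → V → ℝ} (hα : ∀ v u, α v u = - α u v) (x y : V) :
    Complex.exp (Complex.I * (α y x : ℝ)) * Complex.exp (Complex.I * (α x y : ℝ)) = 1 := by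
  rw [← Complex.exp_add, hα x y]
  push_cast
  ring_nf
  exact Complex.exp_zero

lemma exp_conj_self (α : V → V → ℝ) (a b : V) :
    Complex.exp (Complex.I * (α a b : ℝ)) * (starRingEnd ℂ) (Complex.exp (Complex.I * (α a b : ℝ))) = 1 := by
  rw [Complex.mul_conj]
  simp [Complex.normSq_eq_norm_sq, Complex.norm_exp]

lemma combLap_isHermitian (G : SimpleGraph V) (α : V → V → ℝ) (hα : ∀ v u, α v u = - α u v) :
    (combLap G α).IsHermitian := by
  rw [Matrix.IsHermitian]
  ext v u
  rw [Matrix.conjTranspose_apply, combLap_apply, combLap_apply, star_sub]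
  congr 1
  · by_cases h : u = v
    · subst h; simp [Complex.conj_ofReal]
    · simp [h, Ne.symm h]
  · have hadj : G.Adj u v ↔ G.Adj v u := G.adj_comm u v
    by_cases h : G.Adj v u
    · rw [if_pos (hadj.mpr h), if_pos h, star_mul']
      rw [show star ((((1:ℝ)):ℂ)) = ((1:ℝ):ℂ) from by simp]
      congr 1
      exact exp_star hα v u
    · rw [if_neg (fun hh => h (hadj.mp hh)), if_neg h]
      simp

lemma adj_split (G : SimpleGraph V) {x y : V} (hxy : G.Adj x y) (v u : V) :
    (if G.Adj v u then (1:ℝ) else 0)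
      = (if (G.deleteEdges {s(x,y)}).Adj v u then (1:ℝ) else 0)
        + (if (v=x∧u=y)∨(v=y∧u=x) then (1:ℝ) else 0) := by
  by_cases hC : (v=x∧u=y)∨(v=y∧u=x)
  · have hadj : G.Adj v u := by
      rcases hC with ⟨h1,h2⟩|⟨h1,h2⟩
      · subst h1; subst h2; exact hxy
      · subst h1; subst h2; exact hxy.symm
    have hdel : ¬ (G.deleteEdges {s(x,y)}).Adj v u := by
      simp only [SimpleGraph.deleteEdges_adj, Set.mem_singleton_iff, Sym2.eq_iff]
      tauto
    simp [hadj, hdel, hC]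
  · have hiff : (G.deleteEdges {s(x,y)}).Adj v u ↔ G.Adj v u := by
      simp only [SimpleGraph.deleteEdges_adj, Set.mem_singleton_iff, Sym2.eq_iff]
      tauto
    by_cases h : G.Adj v u <;> simp [h, hiff, hC]

lemma uvec_key {x y : V} (hne : x ≠ y) (α : V → V → ℝ) (hα : ∀ v u, α v u = - α u v) (v u : V) :
    uvec x y α v * star (uvec x y α) u
      = (if v = u then ((if v = x then (1:ℝ) else if v = y then 1 else 0 : ℝ) : ℂ) else 0)
        - ((if (v=x∧u=y)∨(v=y∧u=x) then (1:ℝ) else 0 : ℝ) : ℂ)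
          * Complex.exp (Complex.I * (α v u : ℝ)) := by
  have hs : star (uvec x y α) u = star (uvec x y α u) := rfl
  rw [hs]
  by_cases hvx : v = x
  · by_cases hux : u = x
    · simp [uvec, hvx, hux, hne]
    · by_cases huy : u = y
      · simp [uvec, hvx, huy, hne, Ne.symm hne, exp_star hα]
      · have h1 : x ≠ u := fun h => hux h.symm
        simp [uvec, hvx, hux, huy, hne, h1]
  · by_cases hvy : v = y
    · by_cases hux : u = x
      · simp [uvec, hvy, hux, hvx, Ne.symm hne, hne]
      · by_cases huy : u = y
        · simp [uvec, hvy, huy, hvx, Ne.symm hne, hne, Complex.star_def, exp_conj_self]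
        · have h1 : y ≠ u := fun h => huy h.symm
          simp [uvec, hvy, hvx, hux, huy, Ne.symm hne, h1]
    · simp [uvec, hvx, hvy]

lemma lap_diff (G : SimpleGraph V) {x y : V} (hxy : G.Adj x y) (α : V → V → ℝ)
    (hα : ∀ v u, α v u = - α u v) :
    combLap G α = combLap (G.deleteEdges {s(x,y)}) α
      + Matrix.vecMulVec (uvec x y α) (star (uvec x y α)) := by
  have hne := G.ne_of_adj hxy
  ext v u
  rw [Matrix.add_apply, Matrix.vecMulVec_apply, combLap_apply, combLap_apply,
    uvec_key hne α hα v u]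
  have hdeg : (∑ u', if G.Adj v u' then (1:ℝ) else 0)
      = (∑ u', if (G.deleteEdges {s(x,y)}).Adj v u' then (1:ℝ) else 0)
        + (if v = x then (1:ℝ) else if v = y then 1 else 0) := by
    have hind : (if v = x then (1:ℝ) else if v = y then 1 else 0)
        = ∑ u', if (v=x∧u'=y)∨(v=y∧u'=x) then (1:ℝ) else 0 := by
      by_cases hvx : v = x
      · simp [hvx, hne, Finset.sum_ite_eq']
      · by_cases hvy : v = y
        · simp [hvx, hvy, Ne.symm hne, Finset.sum_ite_eq']
        · simp [hvx, hvy]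
    rw [hind, ← Finset.sum_add_distrib]
    exact Finset.sum_congr rfl fun u' _ => adj_split G hxy v u'
  rw [adj_split G hxy v u, hdeg]
  by_cases hvu : v = u <;> simp [hvu] <;> push_cast <;> ring

lemma trace_uvec {x y : V} (hne : x ≠ y) (α : V → V → ℝ) :
    Matrix.trace (Matrix.vecMulVec (uvec x y α) (star (uvec x y α))) = 2 := by
  rw [Matrix.trace]
  have h : ∀ v, Matrix.diag (Matrix.vecMulVec (uvec x y α) (star (uvec x y α))) v
      = (if v = x then (1:ℂ) else if v = y then 1 else 0) := by
    intro v
    rw [Matrix.diag_apply, Matrix.vecMulVec_apply]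
    have hs : star (uvec x y α) v = star (uvec x y α v) := rfl
    rw [hs]
    by_cases hvx : v = x
    · simp [uvec, hvx]
    · by_cases hvy : v = y
      · simp [uvec, hvx, hvy, Ne.symm hne, Complex.star_def, exp_conj_self]
      · simp [uvec, hvx, hvy]
  rw [Finset.sum_congr rfl (fun v _ => h v)]
  have h2 : ∀ v, (if v = x then (1:ℂ) else if v = y then 1 else 0)
      = (if v = x then (1:ℂ) else 0) + (if v = y then 1 else 0) := by
    intro v
    by_cases hvx : v = x
    · simp [hvx, hne]
    · simp [hvx]
  rw [Finset.sum_congr rfl (fun v _ => h2 v), Finset.sum_add_distrib]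
  simp [Finset.sum_ite_eq']
  norm_num

end Stage5

/-- deleting one edge from a graph with combinatorial weights:
(i) `λ_k(G') ≤ λ_k(G)`; (ii) `λ_k(G) ≤ λ_{k+1}(G')`; (iii) strict inequality
`λ_k(G') < λ_k(G)` for some `k`. -/
theorem stmt11 {V : Type} [Fintype V] [DecidableEq V] [Nonempty V]
    (hn : 2 ≤ Fintype.card V)
    (G : SimpleGraph V) (x y : V) (hxy : G.Adj x y)
    (α : V → V → ℝ) (hα : ∀ v u, α v u = - α u v) :
    (∀ k : ℕ, 1 ≤ k → k ≤ Fintype.card V →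
      lamk (combLap (G.deleteEdges {s(x, y)}) α) (k - 1) ≤ lamk (combLap G α) (k - 1))
    ∧ (∀ k : ℕ, 1 ≤ k → k ≤ Fintype.card V - 1 →
      lamk (combLap G α) (k - 1) ≤ lamk (combLap (G.deleteEdges {s(x, y)}) α) k)
    ∧ (∃ k : ℕ, 1 ≤ k ∧ k ≤ Fintype.card V ∧
      lamk (combLap (G.deleteEdges {s(x, y)}) α) (k - 1) < lamk (combLap G α) (k - 1)) := by
  classical
  have hne : x ≠ y := G.ne_of_adj hxy
  have hAh : (combLap (G.deleteEdges {s(x, y)}) α).IsHermitian := combLap_isHermitian _ α hα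
  have hMh : (combLap G α).IsHermitian := combLap_isHermitian _ α hα
  have hdiff := lap_diff G hxy α hα
  obtain ⟨h1, h2⟩ := interlace hAh hMh hdiff
  refine ⟨?_, ?_, ?_⟩
  · intro k hk1 hkn
    exact h1 (k - 1) (by omega)
  · intro k hk1 hkn
    have hk : (k - 1) + 1 < Fintype.card V := by omega
    have h3 := h2 (k - 1) hk
    rwa [show k - 1 + 1 = k by omega] at h3
  · by_contra hcon
    push_neg at hcon
    have heq : ∀ j < Fintype.card V,
        lamk (combLap (G.deleteEdges {s(x, y)}) α) j = lamk (combLap G α) j := by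
      intro j hj
      have hle := h1 j hj
      have hge := hcon (j + 1) (by omega) (by omega)
      rw [Nat.add_sub_cancel] at hge
      exact le_antisymm hle hge
    have hsumA := lamk_sum hAh
    have hsumM := lamk_sum hMh
    have hsame : ∑ k ∈ Finset.range (Fintype.card V), lamk (combLap (G.deleteEdges {s(x, y)}) α) k
        = ∑ k ∈ Finset.range (Fintype.card V), lamk (combLap G α) k :=
      Finset.sum_congr rfl fun j hj => heq j (Finset.mem_range.mp hj)
    have htr : (combLap G α).trace = (combLap (G.deleteEdges {s(x, y)}) α).trace + 2 := by
      rw [hdiff, Matrix.trace_add, trace_uvec hne α]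
    have hre : (combLap G α).trace.re = (combLap (G.deleteEdges {s(x, y)}) α).trace.re + 2 := by
      rw [htr]
      simp
    rw [← hsumA, ← hsumM, hsame] at hre
    linarith
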